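/- arXiv:2603.12107 — 2 statements merged into one kernel-verified Lean document; each statement's English description precedes it below -/
import Mathlib

section
/- Let m > 0, t_f > 0, I0 ∈ (0,1). The function p(x,x̄) = ((1 − I(s(x,x̄))) / (1 − I0)) · exp(−I(s(x,x̄)) · max(x̄ − x, 0)), where s(x,x̄) = t_f − max(x, x̄) and I(u) = I0/(I0 + (1 − I0)·exp(−u)), is continuously differentiable on the open square (0, t_f) × (0, t_f); in particular both partial derivatives exist and are continuous there, even across the diagonal x = x̄ where max(x, x̄) and max(x̄ − x, 0) are individually non-differentiable. Consequently 𝒟(x,x̄) = 1 − p(x,x̄)·(1 − x/m) is continuously differentiable on (0, t_f) × (0, t_f). -/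
/-- Prevalence function `I(u) = I0 / (I0 + (1 - I0) exp(-u))`. -/
noncomputable def Ifun (I0 u : ℝ) : ℝ := I0 / (I0 + (1 - I0) * Real.exp (-u))

/-- Susceptibility probability `p(x, x̄)`. -/
noncomputable def pSus (tf I0 x xb : ℝ) : ℝ :=
  ((1 - Ifun I0 (tf - max x xb)) / (1 - I0)) *
    Real.exp (-(Ifun I0 (tf - max x xb)) * max (xb - x) 0)

/-- Restricted disutility `𝒟(x, x̄) = 1 - p(x,x̄)(1 - x/m)`. -/
noncomputable def Dis (m tf I0 x xb : ℝ) : ℝ := 1 - pSus tf I0 x xb * (1 - x / m)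

/-- The smooth extension `Φ(x, M) = ((1 - I(tf - M))/(1-I0)) exp(-I(tf-M)(M-x))`. -/
noncomputable def Phi (tf I0 : ℝ) (y : ℝ × ℝ) : ℝ :=
  ((1 - Ifun I0 (tf - y.2)) / (1 - I0)) *
    Real.exp (-(Ifun I0 (tf - y.2)) * (y.2 - y.1))

lemma Ifun_den_pos {I0 : ℝ} (h0 : 0 < I0) (h1 : I0 < 1) (u : ℝ) :
    0 < I0 + (1 - I0) * Real.exp (-u) := by
  have := Real.exp_pos (-u)
  nlinarith

lemma Ifun_contDiff {I0 : ℝ} (h0 : 0 < I0) (h1 : I0 < 1) :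
    ContDiff ℝ 1 (Ifun I0) := by
  apply contDiff_const.div
  · exact contDiff_const.add (contDiff_const.mul (Real.contDiff_exp.comp contDiff_neg))
  · exact fun u => ne_of_gt (Ifun_den_pos h0 h1 u)

lemma Ifun_hasDerivAt {I0 : ℝ} (h0 : 0 < I0) (h1 : I0 < 1) (u : ℝ) :
    HasDerivAt (Ifun I0) (Ifun I0 u * (1 - Ifun I0 u)) u := by
  have hd : HasDerivAt (fun v : ℝ => I0 + (1 - I0) * Real.exp (-v))
      (0 + (1 - I0) * (Real.exp (-u) * (-1))) u := by
    have h1' : HasDerivAt (fun v : ℝ => -v) (-1 : ℝ) u := (hasDerivAt_id u).neg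
    have h2 : HasDerivAt (fun v : ℝ => Real.exp (-v)) (Real.exp (-u) * (-1)) u :=
      (Real.hasDerivAt_exp (-u)).comp u h1'
    exact (hasDerivAt_const u I0).add (h2.const_mul (1 - I0))
  have hne : I0 + (1 - I0) * Real.exp (-u) ≠ 0 := ne_of_gt (Ifun_den_pos h0 h1 u)
  have h : HasDerivAt (fun y => I0 / (I0 + (1 - I0) * Real.exp (-y))) ((0 * (I0 + (1 - I0) * Real.exp (-u)) - I0 * (0 + (1 - I0) * (Real.exp (-u) * -1))) / (I0 + (1 - I0) * Real.exp (-u)) ^ 2) u :=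
    (hasDerivAt_const u I0).div hd hne
  convert h using 1
  · rfl
  unfold Ifun
  field_simp
  ring

lemma Phi_contDiff {tf I0 : ℝ} (h0 : 0 < I0) (h1 : I0 < 1) :
    ContDiff ℝ 1 (Phi tf I0) := by
  have hK : ContDiff ℝ 1 (fun y : ℝ × ℝ => Ifun I0 (tf - y.2)) :=
    (Ifun_contDiff h0 h1).comp (contDiff_const.sub contDiff_snd)
  exact ((contDiff_const.sub hK).div_const _).mul
    ((hK.neg.mul (contDiff_snd.sub contDiff_fst)).exp)

/-- Along the second variable, the derivative of `Φ` vanishes at diagonal points. -/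
lemma Phi_deriv_snd_diag {tf I0 : ℝ} (h0 : 0 < I0) (h1 : I0 < 1) (x : ℝ) :
    HasDerivAt (fun M => Phi tf I0 (x, M)) 0 x := by
  set Kx := Ifun I0 (tf - x) with hKx
  have hline : HasDerivAt (fun M : ℝ => tf - M) (0 - 1) x :=
    (hasDerivAt_const x tf).sub (hasDerivAt_id x)
  have hK : HasDerivAt (fun M : ℝ => Ifun I0 (tf - M)) (Kx * (1 - Kx) * (0 - 1)) x :=
    (Ifun_hasDerivAt h0 h1 (tf - x)).comp x hline
  have hA : HasDerivAt (fun M : ℝ => (1 - Ifun I0 (tf - M)) / (1 - I0))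
      ((0 - Kx * (1 - Kx) * (0 - 1)) / (1 - I0)) x :=
    ((hasDerivAt_const x (1:ℝ)).sub hK).div_const _
  have hMx : HasDerivAt (fun M : ℝ => M - x) (1 : ℝ) x := (hasDerivAt_id x).sub_const x
  have hinner : HasDerivAt (fun M : ℝ => -(Ifun I0 (tf - M)) * (M - x))
      (-(Kx * (1 - Kx) * (0 - 1)) * (x - x) + -Kx * 1) x := hK.neg.mul hMx
  have hB : HasDerivAt (fun M : ℝ => Real.exp (-(Ifun I0 (tf - M)) * (M - x)))
      (Real.exp (-Kx * (x - x)) * (-(Kx * (1 - Kx) * (0 - 1)) * (x - x) + -Kx * 1)) x :=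
    hinner.exp
  have htot : HasDerivAt (fun M => (1 - Ifun I0 (tf - M)) / (1 - I0) * Real.exp (-Ifun I0 (tf - M) * (M - x))) _ x := hA.mul hB
  have : (fun M => Phi tf I0 (x, M)) =
      fun M => ((1 - Ifun I0 (tf - M)) / (1 - I0)) *
        Real.exp (-(Ifun I0 (tf - M)) * (M - x)) := by
    funext M; rfl
  rw [this]
  convert htot using 1
  simp only [sub_self, mul_zero, zero_mul, neg_zero, Real.exp_zero, mul_one, zero_add,
    zero_sub, neg_neg]
  ring

lemma fderiv_Phi_diag {tf I0 : ℝ} (h0 : 0 < I0) (h1 : I0 < 1) (x : ℝ) :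
    fderiv ℝ (Phi tf I0) (x, x) ((0 : ℝ), (1 : ℝ)) = 0 := by
  have hΦ : HasFDerivAt (Phi tf I0) (fderiv ℝ (Phi tf I0) (x, x)) (x, x) :=
    (((Phi_contDiff h0 h1).differentiable one_ne_zero) (x, x)).hasFDerivAt
  have hg : HasDerivAt (fun M : ℝ => ((x : ℝ), M)) ((0 : ℝ), (1 : ℝ)) x :=
    (hasDerivAt_const x x).prodMk (hasDerivAt_id x)
  have hc : HasDerivAt (fun M => Phi tf I0 (x, M))
      (fderiv ℝ (Phi tf I0) (x, x) ((0 : ℝ), (1 : ℝ))) x :=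
    hΦ.comp_hasDerivAt x hg
  exact hc.unique (Phi_deriv_snd_diag h0 h1 x)

/-- Applying the diagonal fderiv to a vector with zero first coordinate gives `0`. -/
lemma fderiv_Phi_diag_apply {tf I0 : ℝ} (h0 : 0 < I0) (h1 : I0 < 1) (x t : ℝ) :
    fderiv ℝ (Phi tf I0) (x, x) ((0 : ℝ), t) = 0 := by
  have : ((0 : ℝ), t) = t • ((0 : ℝ), (1 : ℝ)) := by simp
  rw [this, map_smul, fderiv_Phi_diag h0 h1 x, smul_zero]

/-- The key global derivative claim: `q ↦ Φ(q.1, max q.1 q.2)` has everywhere the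
continuous derivative `fderiv Φ (q.1, max q.1 q.2)`. -/
lemma hasFDerivAt_phiMax {tf I0 : ℝ} (h0 : 0 < I0) (h1 : I0 < 1) (q : ℝ × ℝ) :
    HasFDerivAt (fun p : ℝ × ℝ => Phi tf I0 (p.1, max p.1 p.2))
      (fderiv ℝ (Phi tf I0) (q.1, max q.1 q.2)) q := by
  have hdiff := (Phi_contDiff (tf := tf) h0 h1).differentiable one_ne_zero
  rcases lt_trichotomy q.1 q.2 with hlt | heq | hgt
  · -- region x < x̄ : the function agrees with Φ near q
    have hmem : q ∈ {p : ℝ × ℝ | p.1 < p.2} := hlt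
    have hopen : IsOpen {p : ℝ × ℝ | p.1 < p.2} := isOpen_lt continuous_fst continuous_snd
    have hev : (fun p : ℝ × ℝ => Phi tf I0 (p.1, max p.1 p.2)) =ᶠ[nhds q] Phi tf I0 := by
      filter_upwards [hopen.mem_nhds hmem] with p hp
      have : max p.1 p.2 = p.2 := max_eq_right (le_of_lt hp)
      rw [this]
    have h := (hdiff q).hasFDerivAt
    rw [max_eq_right (le_of_lt hlt)]
    exact h.congr_of_eventuallyEq hev
  · -- diagonal点: the raw little-o argument
    obtain ⟨x, xb⟩ := q
    simp only at heq
    subst heq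
    rw [max_self]
    set A := fderiv ℝ (Phi tf I0) (x, x) with hA
    rw [hasFDerivAt_iff_isLittleO_nhds_zero]
    have hΦ : HasFDerivAt (Phi tf I0) A (x, x) := (hdiff (x, x)).hasFDerivAt
    have hE : (fun k : ℝ × ℝ => Phi tf I0 ((x, x) + k) - Phi tf I0 (x, x) - A k)
        =o[nhds 0] fun k => k := hasFDerivAt_iff_isLittleO_nhds_zero.1 hΦ
    set G : ℝ × ℝ → ℝ × ℝ := fun h => (h.1, max h.1 h.2) with hG
    have hGcont : Continuous G := continuous_fst.prodMk (continuous_fst.max continuous_snd)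
    have hG0 : G 0 = 0 := by simp [hG]
    have htend : Filter.Tendsto G (nhds 0) (nhds 0) := by
      simpa [hG0] using hGcont.tendsto 0
    have hcomp := hE.comp_tendsto htend
    have hbig : (fun h : ℝ × ℝ => G h) =O[nhds 0] fun h : ℝ × ℝ => h := by
      apply Asymptotics.isBigO_of_le
      intro h
      rw [Prod.norm_def, Prod.norm_def]
      apply max_le (le_max_left _ _)
      have : ‖max h.1 h.2‖ ≤ max ‖h.1‖ ‖h.2‖ := by
        rcases le_total h.1 h.2 with hle | hle
        · rw [max_eq_right hle]; exact le_max_right _ _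
        · rw [max_eq_left hle]; exact le_max_left _ _
      exact this.trans le_rfl
    have hfinal := hcomp.trans_isBigO hbig
    have hEq : (fun h : ℝ × ℝ =>
        Phi tf I0 ((x + h.1), max (x + h.1) (x + h.2)) - Phi tf I0 (x, x) - A h) =
        ((fun k : ℝ × ℝ => Phi tf I0 ((x, x) + k) - Phi tf I0 (x, x) - A k) ∘ G) := by
      funext h
      have hmax : max (x + h.1) (x + h.2) = x + max h.1 h.2 := max_add_add_left x h.1 h.2
      have hArw : A h = A (G h) := by
        have : h = G h + ((0 : ℝ), h.2 - max h.1 h.2) := by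
          simp [hG, Prod.ext_iff]
        rw [this, map_add, fderiv_Phi_diag_apply h0 h1, add_zero]
        simp [hG]
      simp only [Function.comp, hG, hmax, hArw, Prod.mk_add_mk, add_zero]
    have : (fun h : ℝ × ℝ =>
        Phi tf I0 (((x, x) + h).1, max ((x, x) + h).1 ((x, x) + h).2)
          - Phi tf I0 ((x, x).1, max (x, x).1 (x, x).2) - A h)
        =o[nhds 0] fun h : ℝ × ℝ => h := by
      simpa [hEq, max_self] using hfinal
    simpa [max_self] using this
  · -- region x > x̄ : the function agrees with `Φ ∘ Δ`, `Δ p = (p.1, p.1)` near q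
    set Δ : ℝ × ℝ →L[ℝ] ℝ × ℝ :=
      (ContinuousLinearMap.fst ℝ ℝ ℝ).prod (ContinuousLinearMap.fst ℝ ℝ ℝ) with hΔ
    have hΦ : HasFDerivAt (Phi tf I0) (fderiv ℝ (Phi tf I0) (q.1, q.1)) (q.1, q.1) :=
      (hdiff (q.1, q.1)).hasFDerivAt
    have hΔd : HasFDerivAt (fun p : ℝ × ℝ => ((p.1 : ℝ), (p.1 : ℝ))) Δ q := by
      have := Δ.hasFDerivAt (x := q)
      exact this
    have hcomp : HasFDerivAt (fun p : ℝ × ℝ => Phi tf I0 (p.1, p.1))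
        ((fderiv ℝ (Phi tf I0) (q.1, q.1)).comp Δ) q := by have := hΦ.comp q hΔd; exact this
    have hmem : q ∈ {p : ℝ × ℝ | p.2 < p.1} := hgt
    have hopen : IsOpen {p : ℝ × ℝ | p.2 < p.1} := isOpen_lt continuous_snd continuous_fst
    have hev : (fun p : ℝ × ℝ => Phi tf I0 (p.1, max p.1 p.2)) =ᶠ[nhds q]
        (fun p : ℝ × ℝ => Phi tf I0 (p.1, p.1)) := by
      filter_upwards [hopen.mem_nhds hmem] with p hp
      rw [max_eq_left (le_of_lt hp)]
    have h := hcomp.congr_of_eventuallyEq hev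
    rw [max_eq_left (le_of_lt hgt)]
    have hEqL : (fderiv ℝ (Phi tf I0) (q.1, q.1)).comp Δ
        = fderiv ℝ (Phi tf I0) (q.1, q.1) := by
      apply ContinuousLinearMap.ext
      intro v
      rw [ContinuousLinearMap.comp_apply]
      have hΔv : Δ v = (v.1, v.1) := rfl
      rw [hΔv]
      have hv : ((v.1 : ℝ), (v.1 : ℝ)) = v + ((0 : ℝ), v.1 - v.2) := by
        simp [Prod.ext_iff]
      rw [hv, map_add, fderiv_Phi_diag_apply h0 h1, add_zero]
    rw [← hEqL]
    exact h
  
/-- `pSus` as a function of the pair equals `Φ(x, max x x̄)`. -/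
lemma pSus_eq_phiMax (tf I0 : ℝ) :
    (fun q : ℝ × ℝ => pSus tf I0 q.1 q.2) =
      fun q : ℝ × ℝ => Phi tf I0 (q.1, max q.1 q.2) := by
  funext q
  unfold pSus Phi
  have : max (q.2 - q.1) 0 = max q.1 q.2 - q.1 := by
    rw [max_comm q.1 q.2, ← max_sub_sub_right q.2 q.1 q.1, sub_self]
  rw [this]

lemma pSus_contDiff {tf I0 : ℝ} (h0 : 0 < I0) (h1 : I0 < 1) :
    ContDiff ℝ 1 (fun q : ℝ × ℝ => pSus tf I0 q.1 q.2) := by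
  rw [pSus_eq_phiMax]
  rw [contDiff_one_iff_fderiv]
  constructor
  · exact fun q => (hasFDerivAt_phiMax h0 h1 q).differentiableAt
  · have : fderiv ℝ (fun p : ℝ × ℝ => Phi tf I0 (p.1, max p.1 p.2)) =
        fun q => fderiv ℝ (Phi tf I0) (q.1, max q.1 q.2) :=
      funext fun q => (hasFDerivAt_phiMax h0 h1 q).fderiv
    rw [this]
    exact ((Phi_contDiff h0 h1).continuous_fderiv one_ne_zero).comp
      (continuous_fst.prodMk (continuous_fst.max continuous_snd))

set_option linter.unusedVariables false in
/-- The susceptibility probability `p` is continuously differentiable on the open square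
`(0, t_f) × (0, t_f)` (even across the diagonal `x = x̄`), and consequently so is the
restricted disutility `𝒟`. -/
theorem stmt4 (m tf I0 : ℝ) (hm : 0 < m) (htf : 0 < tf)
    (hI0 : I0 ∈ Set.Ioo (0:ℝ) 1) :
    ContDiffOn ℝ 1 (fun q : ℝ × ℝ => pSus tf I0 q.1 q.2)
      (Set.Ioo 0 tf ×ˢ Set.Ioo 0 tf) ∧
    ContDiffOn ℝ 1 (fun q : ℝ × ℝ => Dis m tf I0 q.1 q.2)
      (Set.Ioo 0 tf ×ˢ Set.Ioo 0 tf) := by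
  obtain ⟨h0, h1⟩ := hI0
  have hp := pSus_contDiff (tf := tf) h0 h1
  have hD : ContDiff ℝ 1 (fun q : ℝ × ℝ => Dis m tf I0 q.1 q.2) := by
    unfold Dis
    exact contDiff_const.sub (hp.mul (contDiff_const.sub (contDiff_fst.div_const m)))
  exact ⟨hp.contDiffOn, hD.contDiffOn⟩
end

section
/- Let m > 0, t_f > 0, I0 ∈ (0,1). For every x̄ ∈ (0, t_f), the partial derivative of 𝒟(x, x̄) with respect to the first argument x, evaluated at x = x̄, exists and equals (1 − I(t_f − x̄)) · (1 − I(t_f − x̄)·(m − x̄)) / (m·(1 − I0)). In particular, x̄ is a critical point of x ↦ 𝒟(x, x̄) at x = x̄ if and only if I(t_f − x̄)·(m − x̄) = 1. -/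
lemma Ifun_denom_pos {I0 : ℝ} (u : ℝ) (h : I0 ∈ Set.Ioo (0:ℝ) 1) :
    0 < I0 + (1 - I0) * Real.exp (-u) := by
  have := Real.exp_pos (-u)
  nlinarith [h.1, h.2]

lemma Ifun_lt_one {I0 : ℝ} (u : ℝ) (h : I0 ∈ Set.Ioo (0:ℝ) 1) : Ifun I0 u < 1 := by
  unfold Ifun
  rw [div_lt_one (Ifun_denom_pos u h)]
  nlinarith [Real.exp_pos (-u), h.1, h.2]

lemma hasDerivAt_Ifun {I0 : ℝ} (h : I0 ∈ Set.Ioo (0:ℝ) 1) (u : ℝ) :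
    HasDerivAt (Ifun I0) (Ifun I0 u * (1 - Ifun I0 u)) u := by
  have hD := Ifun_denom_pos u h
  have h1 : HasDerivAt (fun v : ℝ => I0 + (1 - I0) * Real.exp (-v))
      ((1 - I0) * (Real.exp (-u) * (-1))) u := by
    have hexp : HasDerivAt (fun v : ℝ => Real.exp (-v)) (Real.exp (-u) * (-1)) u :=
      ((hasDerivAt_id u).neg).exp
    exact (hexp.const_mul (1 - I0)).const_add I0
  have h2 := (hasDerivAt_const u I0).div h1 hD.ne'
  have heq : (0 * (I0 + (1 - I0) * Real.exp (-u)) -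
        I0 * ((1 - I0) * (Real.exp (-u) * (-1)))) / (I0 + (1 - I0) * Real.exp (-u)) ^ 2
      = Ifun I0 u * (1 - Ifun I0 u) := by
    unfold Ifun
    field_simp
    ring
  rw [heq] at h2
  exact h2

/-- On the diagonal, the partial derivative of `𝒟(x, x̄)` with respect to the first
argument at `x = x̄` equals `(1 - I(t_f - x̄))(1 - I(t_f - x̄)(m - x̄)) / (m (1 - I0))`;
in particular `x̄` is a critical point of `x ↦ 𝒟(x, x̄)` at `x = x̄` if and only if
`I(t_f - x̄)(m - x̄) = 1`. -/
theorem stmt5 (m tf I0 : ℝ) (hm : 0 < m) (htf : 0 < tf)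
    (hI0 : I0 ∈ Set.Ioo (0:ℝ) 1) :
    ∀ xb ∈ Set.Ioo (0:ℝ) tf,
      HasDerivAt (fun x => Dis m tf I0 x xb)
        ((1 - Ifun I0 (tf - xb)) * (1 - Ifun I0 (tf - xb) * (m - xb)) / (m * (1 - I0)))
        xb ∧
      ((1 - Ifun I0 (tf - xb)) * (1 - Ifun I0 (tf - xb) * (m - xb)) / (m * (1 - I0)) = 0
        ↔ Ifun I0 (tf - xb) * (m - xb) = 1) := by
  intro xb hxb
  have hI0' : (1 : ℝ) - I0 ≠ 0 := by have := hI0.2; linarith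
  set J := Ifun I0 (tf - xb) with hJ
  have hJlt : J < 1 := Ifun_lt_one _ hI0
  set d := (1 - J) * (1 - J * (m - xb)) / (m * (1 - I0)) with hd
  constructor
  · -- right branch: g₊ x = 1 - ((1 - Ifun I0 (tf - x))/(1-I0)) * (1 - x/m)
    have hplus : HasDerivAt
        (fun x : ℝ => 1 - ((1 - Ifun I0 (tf - x)) / (1 - I0)) * (1 - x / m)) d xb := by
      have hinner : HasDerivAt (fun x : ℝ => tf - x) (-1) xb := by
        simpa using (hasDerivAt_id' xb).const_sub tf
      have hI : HasDerivAt (fun x : ℝ => Ifun I0 (tf - x)) (J * (1 - J) * (-1)) xb :=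
        (hasDerivAt_Ifun hI0 (tf - xb)).comp xb hinner
      have h3 : HasDerivAt (fun x : ℝ => (1 - Ifun I0 (tf - x)) / (1 - I0))
          ((0 - J * (1 - J) * (-1)) / (1 - I0)) xb :=
        (((hasDerivAt_const xb (1:ℝ)).sub hI)).div_const _
      have h4 : HasDerivAt (fun x : ℝ => 1 - x / m) (0 - 1 / m) xb :=
        (hasDerivAt_const xb (1:ℝ)).sub ((hasDerivAt_id xb).div_const m)
      have h5 := (hasDerivAt_const xb (1:ℝ)).sub (h3.mul h4)
      refine h5.congr_deriv ?_
      rw [hd]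
      field_simp
      ring
    -- left branch: g₋ x = 1 - ((1 - J)/(1-I0)) * exp (-J * (xb - x)) * (1 - x/m)
    have hminus : HasDerivAt
        (fun x : ℝ => 1 - ((1 - J) / (1 - I0)) * Real.exp (-J * (xb - x)) * (1 - x / m))
        d xb := by
      have hlin : HasDerivAt (fun x : ℝ => -J * (xb - x)) (-J * (0 - 1)) xb :=
        ((hasDerivAt_const xb xb).sub (hasDerivAt_id xb)).const_mul (-J)
      have hexp : HasDerivAt (fun x : ℝ => Real.exp (-J * (xb - x)))
          (Real.exp (-J * (xb - xb)) * (-J * (0 - 1))) xb := hlin.exp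
      have h4 : HasDerivAt (fun x : ℝ => 1 - x / m) (0 - 1 / m) xb :=
        (hasDerivAt_const xb (1:ℝ)).sub ((hasDerivAt_id xb).div_const m)
      have h5 := (hasDerivAt_const xb (1:ℝ)).sub
        (((hexp.const_mul ((1 - J) / (1 - I0)))).mul h4)
      refine h5.congr_deriv ?_
      rw [hd]
      simp only [sub_self, mul_zero, Real.exp_zero]
      field_simp
      ring
    have hright : HasDerivWithinAt (fun x => Dis m tf I0 x xb) d (Set.Ici xb) xb := by
      apply (hplus.hasDerivWithinAt).congr
      · intro y hy
        have h1 : max y xb = y := max_eq_left hy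
        have h2 : max (xb - y) 0 = 0 := max_eq_right (by simp [Set.mem_Ici] at hy; linarith)
        simp [Dis, pSus, h1, h2]
      · simp [Dis, pSus]
    have hleft : HasDerivWithinAt (fun x => Dis m tf I0 x xb) d (Set.Iic xb) xb := by
      apply (hminus.hasDerivWithinAt).congr
      · intro y hy
        have h1 : max y xb = xb := max_eq_right hy
        have h2 : max (xb - y) 0 = xb - y := max_eq_left (by simp [Set.mem_Iic] at hy; linarith)
        simp [Dis, pSus, h1, h2, hJ]
      · simp [Dis, pSus, hJ]
    have := hleft.union hright
    rw [Set.Iic_union_Ici, hasDerivWithinAt_univ] at this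
    exact this
  · rw [hd]
    have hne : m * (1 - I0) ≠ 0 := by positivity
    constructor
    · intro h
      have h2 : (1 - J) * (1 - J * (m - xb)) = 0 := by
        field_simp at h
        simpa using h
      rcases mul_eq_zero.1 h2 with h3 | h3
      · exact absurd h3 (by linarith)
      · linarith
    · intro h
      rw [h]
      simp
end
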